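/- arXiv:math/0411433 — 6 statements merged into one kernel-verified Lean document; each statement's English description precedes it below -/
import Mathlib

section
/- Let M and N be closed subspaces of a Hilbert space H. Then sin(M,N) = dist(S, N), where S is the unit sphere of the subspace M̃ = M ⊖ (M ∩ N), i.e., sin(M,N) = inf{dist(x,N) : x ∈ M ∩ (M∩N)^⊥, ‖x‖ = 1} (with the convention that the infimum over the empty set is 1). -/
open ContinuousLinearMap

variable {H : Type*} [NormedAddCommGroup H] [InnerProductSpace ℂ H] [CompleteSpace H]

/-- Cosine of the angle between two subspaces. -/
noncomputable def cosAngle (M N : Submodule ℂ H) : ℝ :=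
  sSup {r : ℝ | ∃ x ∈ M ⊓ (M ⊓ N)ᗮ, ∃ y ∈ N ⊓ (M ⊓ N)ᗮ,
    ‖x‖ = 1 ∧ ‖y‖ = 1 ∧ r = ‖(inner ℂ x y : ℂ)‖}

/-- Sine of the angle: `s(M,N) = (1 - c(M,N)²)^{1/2}`. -/
noncomputable def sinAngle (M N : Submodule ℂ H) : ℝ :=
  Real.sqrt (1 - cosAngle M N ^ 2)

/-- `sin(M,N) = inf {dist(x,N) : x ∈ M ∩ (M∩N)^⊥, ‖x‖ = 1}`, with the convention that the
infimum over the empty set is `1`. -/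
theorem stmt1 (M N : Submodule ℂ H) (hM : IsClosed (M : Set H)) (hN : IsClosed (N : Set H)) :
    (({r : ℝ | ∃ x ∈ M ⊓ (M ⊓ N)ᗮ, ‖x‖ = 1 ∧ r = Metric.infDist x (N : Set H)}).Nonempty →
      sinAngle M N
        = sInf {r : ℝ | ∃ x ∈ M ⊓ (M ⊓ N)ᗮ, ‖x‖ = 1 ∧ r = Metric.infDist x (N : Set H)})
    ∧ ({r : ℝ | ∃ x ∈ M ⊓ (M ⊓ N)ᗮ, ‖x‖ = 1 ∧ r = Metric.infDist x (N : Set H)} = ∅ →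
      sinAngle M N = 1) := by
  haveI : CompleteSpace N := hN.completeSpace_coe
  set C : Set ℝ := {r : ℝ | ∃ x ∈ M ⊓ (M ⊓ N)ᗮ, ∃ y ∈ N ⊓ (M ⊓ N)ᗮ,
    ‖x‖ = 1 ∧ ‖y‖ = 1 ∧ r = ‖(inner ℂ x y : ℂ)‖} with hC
  have hcosC : cosAngle M N = sSup C := rfl
  -- the projection of an element of (M ⊓ N)ᗮ onto N stays in (M ⊓ N)ᗮ
  have h1 : ∀ x : H, x ∈ (M ⊓ N)ᗮ → ((Submodule.orthogonalProjectionOnto N x : H)) ∈ N ⊓ (M ⊓ N)ᗮ := by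
    intro x hx
    refine Submodule.mem_inf.mpr ⟨(Submodule.orthogonalProjectionOnto N x).2,
      (Submodule.mem_orthogonal _ _).mpr fun u hu => ?_⟩
    have h := Submodule.inner_orthogonalProjectionOnto_eq_of_mem_left (K := N) ⟨u, hu.2⟩ x
    rw [Submodule.coe_inner] at h
    exact h.trans ((Submodule.mem_orthogonal _ x).1 hx u hu)
  -- inner products with elements of N factor through the projection
  have h2 : ∀ (x y : H), y ∈ N →
      (inner ℂ x y : ℂ) = inner ℂ ((Submodule.orthogonalProjectionOnto N x : H)) y := by
    intro x y hy
    have h := Submodule.inner_orthogonalProjectionOnto_eq_of_mem_right (K := N) ⟨y, hy⟩ x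
    rw [Submodule.coe_inner] at h
    exact h.symm
  -- distance to N in terms of the projection
  have h3 : ∀ x : H, ‖x‖ = 1 →
      Metric.infDist x (N : Set H)
        = Real.sqrt (1 - ‖(Submodule.orthogonalProjectionOnto N x : H)‖ ^ 2) := by
    intro x hx
    have hmin : ‖x - Submodule.orthogonalProjectionOnto N x‖ = ⨅ y : N, ‖x - y‖ :=
      Submodule.starProjection_minimal x
    have hdist : Metric.infDist x (N : Set H) = ‖x - Submodule.orthogonalProjectionOnto N x‖ := by
      rw [Metric.infDist_eq_iInf, hmin]
      exact iInf_congr fun y => by rw [dist_eq_norm]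
    have hpyth : ‖x‖ ^ 2 = ‖(Submodule.orthogonalProjectionOnto N x : H)‖ ^ 2
        + ‖x - Submodule.orthogonalProjectionOnto N x‖ ^ 2 := by
      have h := Submodule.norm_sq_eq_add_norm_sq_projection x N
      rw [Submodule.coe_norm, Submodule.coe_norm, Submodule.orthogonalProjectionOnto_orthogonal] at h
      exact h
    rw [hdist]
    rw [hx] at hpyth
    have : ‖x - Submodule.orthogonalProjectionOnto N x‖ ^ 2
        = 1 - ‖(Submodule.orthogonalProjectionOnto N x : H)‖ ^ 2 := by linarith
    rw [← this, Real.sqrt_sq (norm_nonneg _)]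
  -- projection norms are at most 1 on unit vectors
  have hple : ∀ x : H, ‖x‖ = 1 → ‖(Submodule.orthogonalProjectionOnto N x : H)‖ ≤ 1 := by
    intro x hx
    have hpyth := Submodule.norm_sq_eq_add_norm_sq_projection x N
    rw [Submodule.coe_norm, Submodule.coe_norm, hx] at hpyth
    nlinarith [norm_nonneg ((Submodule.orthogonalProjectionOnto N x : H)),
      sq_nonneg ‖(Submodule.orthogonalProjectionOnto Nᗮ x : H)‖]
  set A : Set ℝ := {a : ℝ | ∃ x ∈ M ⊓ (M ⊓ N)ᗮ, ‖x‖ = 1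
      ∧ a = ‖(Submodule.orthogonalProjectionOnto N x : H)‖} with hA
  set D : Set ℝ := {r : ℝ | ∃ x ∈ M ⊓ (M ⊓ N)ᗮ, ‖x‖ = 1
      ∧ r = Metric.infDist x (N : Set H)} with hD
  have hA01 : ∀ a ∈ A, 0 ≤ a ∧ a ≤ 1 := by
    rintro a ⟨x, hx, hxn, rfl⟩
    exact ⟨norm_nonneg _, hple x hxn⟩
  have hAbdd : BddAbove A := ⟨1, fun a ha => (hA01 a ha).2⟩
  have hCbdd : BddAbove C := by
    refine ⟨1, ?_⟩
    rintro r ⟨x, hx, y, hy, hxn, hyn, rfl⟩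
    calc ‖(inner ℂ x y : ℂ)‖ ≤ ‖x‖ * ‖y‖ := norm_inner_le_norm x y
    _ = 1 := by rw [hxn, hyn, mul_one]
  have hCnonneg : 0 ≤ sSup C := Real.sSup_nonneg (by
    rintro r ⟨x, hx, y, hy, hxn, hyn, rfl⟩; exact norm_nonneg _)
  -- every element of C is bounded by some element of A
  have hCleA : ∀ r ∈ C, ∀ s, s ∈ upperBounds A → r ≤ s := by
    rintro r ⟨x, hx, y, hy, hxn, hyn, rfl⟩ s hs
    have hyN : y ∈ N := hy.1
    have : (inner ℂ x y : ℂ) = inner ℂ ((Submodule.orthogonalProjectionOnto N x : H)) y := h2 x y hyN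
    rw [this]
    calc ‖(inner ℂ ((Submodule.orthogonalProjectionOnto N x : H)) y : ℂ)‖
        ≤ ‖(Submodule.orthogonalProjectionOnto N x : H)‖ * ‖y‖ := norm_inner_le_norm _ _
    _ = ‖(Submodule.orthogonalProjectionOnto N x : H)‖ := by rw [hyn, mul_one]
    _ ≤ s := hs ⟨x, hx, hxn, rfl⟩
  -- every element of A is at most sSup C
  have hAleC : ∀ a ∈ A, a ≤ sSup C := by
    rintro a ⟨x, hx, hxn, rfl⟩
    by_cases hz : (Submodule.orthogonalProjectionOnto N x : H) = 0
    · rw [hz]; simpa using hCnonneg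
    · set p : H := (Submodule.orthogonalProjectionOnto N x : H) with hp
      have hpn : ‖p‖ ≠ 0 := by simpa using hz
      set y : H := (‖p‖ : ℂ)⁻¹ • p with hy
      have hyN : y ∈ N ⊓ (M ⊓ N)ᗮ := Submodule.smul_mem _ _ (h1 x hx.2)
      have hyn : ‖y‖ = 1 := by
        rw [hy, norm_smul, norm_inv, Complex.norm_real, norm_norm]
        exact inv_mul_cancel₀ hpn
      have hxp : (inner ℂ x p : ℂ) = (‖p‖ : ℂ) ^ 2 := by
        rw [hp, h2 x _ (Submodule.orthogonalProjectionOnto N x).2, ← hp]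
        exact inner_self_eq_norm_sq_to_K p
      have hinner : (inner ℂ x y : ℂ) = (‖p‖ : ℂ)⁻¹ * (‖p‖ : ℂ) ^ 2 := by
        rw [hy, inner_smul_right, hxp]
      have hval : ‖(inner ℂ x y : ℂ)‖ = ‖p‖ := by
        rw [hinner, norm_mul, norm_inv, norm_pow, Complex.norm_real, norm_norm, sq,
          ← mul_assoc, inv_mul_cancel₀ hpn, one_mul]
      refine le_csSup hCbdd ?_
      exact ⟨x, hx, y, hyN, hxn, hyn, hval.symm⟩
  constructor
  · intro hne
    obtain ⟨r0, x0, hx0, hx0n, hr0⟩ := hne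
    have hAne : A.Nonempty := ⟨_, x0, hx0, hx0n, rfl⟩
    set s := sSup A with hs
    have hs0 : 0 ≤ s :=
      le_trans (hA01 _ hAne.choose_spec).1 (le_csSup hAbdd hAne.choose_spec)
    have hs1 : s ≤ 1 := csSup_le hAne fun a ha => (hA01 a ha).2
    -- cosAngle M N = s
    have hcs : cosAngle M N = s := by
      rw [hcosC]
      apply le_antisymm
      · rcases Set.eq_empty_or_nonempty C with hCe | hCne
        · rw [hCe, Real.sSup_empty]; exact hs0
        · exact csSup_le hCne fun r hr => hCleA r hr s fun a ha => le_csSup hAbdd ha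
      · exact csSup_le hAne hAleC
    -- D is {sqrt (1 - a^2) : a ∈ A}
    have hDbdd : BddBelow D := ⟨0, by
      rintro r ⟨x, hx, hxn, rfl⟩; exact Metric.infDist_nonneg⟩
    have hDne : D.Nonempty := ⟨r0, x0, hx0, hx0n, hr0⟩
    rw [sinAngle, hcs]
    apply le_antisymm
    · -- sqrt (1 - s^2) is a lower bound of D
      refine le_csInf hDne ?_
      rintro r ⟨x, hx, hxn, rfl⟩
      rw [h3 x hxn]
      apply Real.sqrt_le_sqrt
      have ha : ‖(Submodule.orthogonalProjectionOnto N x : H)‖ ≤ s :=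
        le_csSup hAbdd ⟨x, hx, hxn, rfl⟩
      nlinarith [norm_nonneg ((Submodule.orthogonalProjectionOnto N x : H))]
    · -- sInf D ≤ sqrt (1 - s^2)
      refine le_of_forall_pos_le_add ?_
      intro ε hε
      obtain ⟨a, haA, hagt⟩ := exists_lt_of_lt_csSup hAne
        (show s - ε ^ 2 / 2 < s by nlinarith)
      obtain ⟨x, hx, hxn, rfl⟩ := haA
      set a := ‖(Submodule.orthogonalProjectionOnto N x : H)‖ with haa
      have ha0 : 0 ≤ a := norm_nonneg _
      have has : a ≤ s := le_csSup hAbdd ⟨x, hx, hxn, rfl⟩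
      have hstep : sInf D ≤ Real.sqrt (1 - a ^ 2) := by
        refine csInf_le hDbdd ?_
        exact ⟨x, hx, hxn, (h3 x hxn).symm⟩
      refine hstep.trans ?_
      have h1a : 0 ≤ 1 - a ^ 2 := by nlinarith [hple x hxn]
      have h1s : 0 ≤ 1 - s ^ 2 := by nlinarith
      set u := Real.sqrt (1 - a ^ 2) with hu
      set v := Real.sqrt (1 - s ^ 2) with hv
      have hu2 : u ^ 2 = 1 - a ^ 2 := Real.sq_sqrt h1a
      have hv2 : v ^ 2 = 1 - s ^ 2 := Real.sq_sqrt h1s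
      have hu0 : 0 ≤ u := Real.sqrt_nonneg _
      have hv0 : 0 ≤ v := Real.sqrt_nonneg _
      nlinarith [sq_nonneg (u - v - ε), sq_nonneg (u + v)]
  · intro hemp
    have hCe : C = ∅ := by
      rw [Set.eq_empty_iff_forall_notMem]
      rintro r ⟨x, hx, y, hy, hxn, hyn, rfl⟩
      have : Metric.infDist x (N : Set H) ∈ D := ⟨x, hx, hxn, rfl⟩
      rw [hemp] at this
      exact this
    have hcos : cosAngle M N = 0 := by rw [hcosC, hCe, Real.sSup_empty]
    rw [sinAngle, hcos]
    norm_num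
end

section
/- Let T ∈ L(H) with closed range and B ∈ L(H) with closed range such that R(T) ⊆ N(B)^⊥. Then γ(B) γ(T) ≤ γ(BT) ≤ ‖B‖ γ(T). -/
open ContinuousLinearMap

variable {H : Type*} [NormedAddCommGroup H] [InnerProductSpace ℂ H] [CompleteSpace H]

/-- The reduced minimum modulus `γ(T) = inf {‖Tx‖ : ‖x‖ = 1, x ∈ N(T)^⊥}`. -/
noncomputable def gamma (T : H →L[ℂ] H) : ℝ :=
  sInf {r : ℝ | ∃ x ∈ (LinearMap.ker (T : H →ₗ[ℂ] H))ᗮ, ‖x‖ = 1 ∧ r = ‖T x‖}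

lemma bddBelow_gammaSet (T : H →L[ℂ] H) :
    BddBelow {r : ℝ | ∃ x ∈ (LinearMap.ker (T : H →ₗ[ℂ] H))ᗮ, ‖x‖ = 1 ∧ r = ‖T x‖} :=
  ⟨0, by rintro r ⟨x, -, -, rfl⟩; exact norm_nonneg _⟩

lemma gamma_nonneg (T : H →L[ℂ] H) : 0 ≤ gamma T :=
  Real.sInf_nonneg (by rintro r ⟨x, -, -, rfl⟩; exact norm_nonneg _)

lemma gamma_le (T : H →L[ℂ] H) {x : H} (hx : x ∈ (LinearMap.ker (T : H →ₗ[ℂ] H))ᗮ) (hx1 : ‖x‖ = 1) :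
    gamma T ≤ ‖T x‖ :=
  csInf_le (bddBelow_gammaSet T) ⟨x, hx, hx1, rfl⟩

lemma gamma_mul_norm_le (B : H →L[ℂ] H) {y : H} (hy : y ∈ (LinearMap.ker (B : H →ₗ[ℂ] H))ᗮ) :
    gamma B * ‖y‖ ≤ ‖B y‖ := by
  rcases eq_or_ne y 0 with rfl | h0
  · simp
  · have hn : ‖y‖ ≠ 0 := norm_ne_zero_iff.2 h0
    have hnpos : (0:ℝ) < ‖y‖ := norm_pos_iff.2 h0
    have hu : ((‖y‖ : ℂ))⁻¹ • y ∈ (LinearMap.ker (B : H →ₗ[ℂ] H))ᗮ :=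
      Submodule.smul_mem _ _ hy
    have hnorm : ‖((‖y‖ : ℂ))⁻¹‖ = ‖y‖⁻¹ := by
      simp [norm_inv]
    have hu1 : ‖((‖y‖ : ℂ))⁻¹ • y‖ = 1 := by
      rw [norm_smul, hnorm, inv_mul_cancel₀ hn]
    have h := gamma_le B hu hu1
    rw [map_smul, norm_smul, hnorm] at h
    rw [mul_comm]
    calc ‖y‖ * gamma B ≤ ‖y‖ * (‖y‖⁻¹ * ‖B y‖) :=
          mul_le_mul_of_nonneg_left h (le_of_lt hnpos)
      _ = ‖B y‖ := by field_simp

/-- If `T` and `B` have closed range and `R(T) ⊆ N(B)^⊥`, then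
`γ(B) γ(T) ≤ γ(BT) ≤ ‖B‖ γ(T)`. -/
theorem stmt4 (T B : H →L[ℂ] H)
    (hT : IsClosed ((LinearMap.range (T : H →ₗ[ℂ] H) : Submodule ℂ H) : Set H))
    (hB : IsClosed ((LinearMap.range (B : H →ₗ[ℂ] H) : Submodule ℂ H) : Set H))
    (hTB : LinearMap.range (T : H →ₗ[ℂ] H) ≤ (LinearMap.ker (B : H →ₗ[ℂ] H))ᗮ) :
    gamma B * gamma T ≤ gamma (B ∘L T) ∧ gamma (B ∘L T) ≤ ‖B‖ * gamma T := by
  have hker : LinearMap.ker ((B ∘L T) : H →ₗ[ℂ] H) = LinearMap.ker (T : H →ₗ[ℂ] H) := by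
    ext x
    simp only [LinearMap.mem_ker, ContinuousLinearMap.coe_comp', Function.comp_apply]
    constructor
    · intro h
      have h1 : T x ∈ LinearMap.ker (B : H →ₗ[ℂ] H) := h
      have h2 : T x ∈ (LinearMap.ker (B : H →ₗ[ℂ] H))ᗮ := hTB ⟨x, rfl⟩
      have h3 := (Submodule.orthogonal_disjoint (LinearMap.ker (B : H →ₗ[ℂ] H))).le_bot ⟨h1, h2⟩
      simpa using h3
    · intro h; show B (T x) = 0; rw [show T x = 0 from h]; simp
  by_cases hne : ∃ x ∈ (LinearMap.ker (T : H →ₗ[ℂ] H))ᗮ, ‖x‖ = 1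
  · obtain ⟨x0, hx0, hx01⟩ := hne
    constructor
    · have hSne : Set.Nonempty {r : ℝ | ∃ x ∈ (LinearMap.ker ((B ∘L T) : H →ₗ[ℂ] H))ᗮ, ‖x‖ = 1 ∧ r = ‖(B ∘L T) x‖} :=
        ⟨‖(B ∘L T) x0‖, x0, by rw [hker]; exact hx0, hx01, rfl⟩
      apply le_csInf hSne
      rintro r ⟨x, hx, hx1, rfl⟩
      rw [hker] at hx
      have h1 : gamma T ≤ ‖T x‖ := gamma_le T hx hx1
      have h2 : gamma B * ‖T x‖ ≤ ‖B (T x)‖ := gamma_mul_norm_le B (hTB ⟨x, rfl⟩)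
      calc gamma B * gamma T ≤ gamma B * ‖T x‖ :=
            mul_le_mul_of_nonneg_left h1 (gamma_nonneg B)
        _ ≤ ‖B (T x)‖ := h2
        _ = ‖(B ∘L T) x‖ := rfl
    · have key : ∀ x ∈ (LinearMap.ker (T : H →ₗ[ℂ] H))ᗮ, ‖x‖ = 1 →
          gamma (B ∘L T) ≤ ‖B‖ * ‖T x‖ := by
        intro x hx hx1
        have h1 : gamma (B ∘L T) ≤ ‖(B ∘L T) x‖ :=
          gamma_le (B ∘L T) (by rw [hker]; exact hx) hx1
        have h2 : ‖(B ∘L T) x‖ ≤ ‖B‖ * ‖T x‖ := by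
          calc ‖(B ∘L T) x‖ = ‖B (T x)‖ := rfl
            _ ≤ ‖B‖ * ‖T x‖ := le_opNorm B (T x)
        exact h1.trans h2
      rcases eq_or_lt_of_le (norm_nonneg B) with hB0 | hBpos
      · have h0 : gamma (B ∘L T) ≤ 0 := by
          have := key x0 hx0 hx01
          rw [← hB0] at this
          simpa using this
        calc gamma (B ∘L T) ≤ 0 := h0
          _ = ‖B‖ * gamma T := by rw [← hB0, zero_mul]
      · have hdiv : gamma (B ∘L T) / ‖B‖ ≤ gamma T := by
          have hSne : Set.Nonempty {r : ℝ | ∃ x ∈ (LinearMap.ker (T : H →ₗ[ℂ] H))ᗮ, ‖x‖ = 1 ∧ r = ‖T x‖} :=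
            ⟨‖T x0‖, x0, hx0, hx01, rfl⟩
          apply le_csInf hSne
          rintro r ⟨x, hx, hx1, rfl⟩
          rw [div_le_iff₀ hBpos, mul_comm]
          exact key x hx hx1
        calc gamma (B ∘L T) = gamma (B ∘L T) / ‖B‖ * ‖B‖ := by
              field_simp
          _ ≤ gamma T * ‖B‖ := mul_le_mul_of_nonneg_right hdiv (le_of_lt hBpos)
          _ = ‖B‖ * gamma T := mul_comm _ _
  · have hT0 : {r : ℝ | ∃ x ∈ (LinearMap.ker (T : H →ₗ[ℂ] H))ᗮ, ‖x‖ = 1 ∧ r = ‖T x‖} = ∅ := by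
      rw [Set.eq_empty_iff_forall_notMem]
      rintro r ⟨x, hx, hx1, -⟩
      exact hne ⟨x, hx, hx1⟩
    have hBT0 : {r : ℝ | ∃ x ∈ (LinearMap.ker ((B ∘L T) : H →ₗ[ℂ] H))ᗮ, ‖x‖ = 1 ∧ r = ‖(B ∘L T) x‖} = ∅ := by
      rw [Set.eq_empty_iff_forall_notMem]
      rintro r ⟨x, hx, hx1, -⟩
      rw [hker] at hx
      exact hne ⟨x, hx, hx1⟩
    have g1 : gamma T = 0 := by rw [gamma, hT0, Real.sInf_empty]
    have g2 : gamma (B ∘L T) = 0 := by rw [gamma, hBT0, Real.sInf_empty]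
    rw [g1, g2]
    simp
end

section
/- Let P_R and P_M be orthogonal projections onto closed subspaces R and M of a Hilbert space. Then the kernel of P_R P_M is M^⊥ ⊕ (M ∩ R^⊥), and hence N(P_R P_M)^⊥ = M ∩ (M ∩ R^⊥)^⊥. -/
open ContinuousLinearMap

variable {H : Type*} [NormedAddCommGroup H] [InnerProductSpace ℂ H] [CompleteSpace H]

lemma ker_of_proj (P : H →L[ℂ] H) (hP1 : P ∘L P = P) (hP2 : IsSelfAdjoint P) :
    LinearMap.ker (P : H →ₗ[ℂ] H) = (LinearMap.range (P : H →ₗ[ℂ] H))ᗮ := by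
  ext x
  simp only [LinearMap.mem_ker, Submodule.mem_orthogonal, ContinuousLinearMap.coe_coe]
  constructor
  · rintro hx u ⟨y, rfl⟩
    have hy : P (P y) = P y := by
      have := ContinuousLinearMap.ext_iff.mp hP1 y
      simpa using this
    calc (inner ℂ (P y) x : ℂ) = inner ℂ (P (P y)) x := by rw [hy]
      _ = inner ℂ ((ContinuousLinearMap.adjoint P) (P y)) x := by rw [hP2.adjoint_eq]
      _ = inner ℂ (P y) (P x) := ContinuousLinearMap.adjoint_inner_left P _ _
      _ = 0 := by rw [hx, inner_zero_right]
  · intro h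
    have h0 : (inner ℂ (P x) (P x) : ℂ) = 0 := by
      have hy : P (P x) = P x := by
        have := ContinuousLinearMap.ext_iff.mp hP1 x
        simpa using this
      calc (inner ℂ (P x) (P x) : ℂ)
            = inner ℂ ((ContinuousLinearMap.adjoint P) (P x)) x :=
              (ContinuousLinearMap.adjoint_inner_left P _ _).symm
        _ = inner ℂ (P (P x)) x := by rw [hP2.adjoint_eq]
        _ = inner ℂ (P x) x := by rw [hy]
        _ = 0 := h (P x) ⟨x, rfl⟩
    exact inner_self_eq_zero.mp h0

lemma fix_of_proj (P : H →L[ℂ] H) (hP1 : P ∘L P = P) {x : H}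
    (hx : x ∈ LinearMap.range (P : H →ₗ[ℂ] H)) : P x = x := by
  obtain ⟨y, rfl⟩ := hx
  have := ContinuousLinearMap.ext_iff.mp hP1 y
  simpa using this

/-- `N(P_R P_M) = M^⊥ ⊕ (M ∩ R^⊥)` and hence `N(P_R P_M)^⊥ = M ∩ (M ∩ R^⊥)^⊥`. -/
theorem stmt7 (R M : Submodule ℂ H) (hR : IsClosed (R : Set H)) (hM : IsClosed (M : Set H))
    (PR PM : H →L[ℂ] H)
    (hPR1 : PR ∘L PR = PR) (hPR2 : IsSelfAdjoint PR) (hPR3 : LinearMap.range (PR : H →ₗ[ℂ] H) = R)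
    (hPM1 : PM ∘L PM = PM) (hPM2 : IsSelfAdjoint PM) (hPM3 : LinearMap.range (PM : H →ₗ[ℂ] H) = M) :
    LinearMap.ker ((PR ∘L PM : H →L[ℂ] H) : H →ₗ[ℂ] H) = Mᗮ ⊔ (M ⊓ Rᗮ)
    ∧ (LinearMap.ker ((PR ∘L PM : H →L[ℂ] H) : H →ₗ[ℂ] H))ᗮ = M ⊓ (M ⊓ Rᗮ)ᗮ := by
  have hkerR : LinearMap.ker (PR : H →ₗ[ℂ] H) = Rᗮ := by rw [ker_of_proj PR hPR1 hPR2, hPR3]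
  have hkerM : LinearMap.ker (PM : H →ₗ[ℂ] H) = Mᗮ := by rw [ker_of_proj PM hPM1 hPM2, hPM3]
  have h1 : LinearMap.ker ((PR ∘L PM : H →L[ℂ] H) : H →ₗ[ℂ] H) = Mᗮ ⊔ (M ⊓ Rᗮ) := by
    ext x
    constructor
    · intro hx
      have hx' : PR (PM x) = 0 := hx
      have hMx : PM x ∈ M ⊓ Rᗮ := by
        refine ⟨hPM3 ▸ ⟨x, rfl⟩, ?_⟩
        rw [← hkerR]; exact hx'
      have hxm : x - PM x ∈ Mᗮ := by
        rw [← hkerM]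
        simp only [LinearMap.mem_ker, map_sub, ContinuousLinearMap.coe_coe]
        rw [fix_of_proj PM hPM1 (x := PM x) ⟨x, rfl⟩, sub_self]
      have : x = (x - PM x) + PM x := by abel
      rw [this]
      exact Submodule.add_mem_sup hxm hMx
    · intro hx
      obtain ⟨a, ha, b, hb, rfl⟩ := Submodule.mem_sup.mp hx
      have hPMa : PM a = 0 := by rw [← ContinuousLinearMap.coe_coe, ← LinearMap.mem_ker, hkerM]; exact ha
      have hPMb : PM b = b := fix_of_proj PM hPM1 (hPM3 ▸ hb.1)
      have hPRb : PR b = 0 := by rw [← ContinuousLinearMap.coe_coe, ← LinearMap.mem_ker, hkerR]; exact hb.2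
      show PR (PM (a + b)) = 0
      rw [map_add, hPMa, hPMb, zero_add, hPRb]
  refine ⟨h1, ?_⟩
  rw [h1, ← Submodule.inf_orthogonal, Submodule.orthogonal_orthogonal_eq_closure]
  congr 1
  exact hM.submodule_topologicalClosure_eq
end

section
/- Let P and Q be orthogonal projections on a Hilbert space H. Then for every k ≥ 1, ‖(PQ)^k − P∧Q‖ = c(R(P), R(Q))^{2k−1}, where P∧Q is the orthogonal projection onto R(P) ∩ R(Q) and c denotes the cosine of the angle between the ranges. -/
open ContinuousLinearMap

variable {H : Type*} [NormedAddCommGroup H] [InnerProductSpace ℂ H] [CompleteSpace H]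

local notation "⟪" x ", " y "⟫" => @inner ℂ _ _ x y

/-- norm of powers of a self-adjoint operator -/
lemma sa_norm_pow {a : H →L[ℂ] H} (ha : IsSelfAdjoint a) {n : ℕ} (hn : 1 ≤ n) :
    ‖a ^ n‖ = ‖a‖ ^ n := by
  rcases eq_or_ne a 0 with rfl | h0
  · simp [zero_pow (by omega : n ≠ 0)]
  refine le_antisymm (norm_pow_le' a hn) ?_
  obtain ⟨k, hk⟩ : ∃ k, n ≤ 2 ^ k := ⟨n, (Nat.lt_two_pow_self (n := n)).le⟩
  have h2 : ‖a ^ 2 ^ k‖ = ‖a‖ ^ 2 ^ k := by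
    have := ha.nnnorm_pow_two_pow k
    calc ‖a ^ 2 ^ k‖ = ((‖a ^ 2 ^ k‖₊ : NNReal) : ℝ) := rfl
      _ = ((‖a‖₊ ^ 2 ^ k : NNReal) : ℝ) := by rw [this]
      _ = ‖a‖ ^ 2 ^ k := by push_cast; rfl
  rcases Nat.eq_zero_or_pos (2 ^ k - n) with hz | hz
  · have hn2 : n = 2 ^ k := le_antisymm hk (by omega)
    rw [hn2]; exact h2.ge
  have key : ‖a‖ ^ n * ‖a‖ ^ (2 ^ k - n) ≤ ‖a ^ n‖ * ‖a‖ ^ (2 ^ k - n) := by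
    calc ‖a‖ ^ n * ‖a‖ ^ (2 ^ k - n) = ‖a‖ ^ 2 ^ k := by
          rw [← pow_add, Nat.add_sub_cancel' hk]
      _ = ‖a ^ 2 ^ k‖ := h2.symm
      _ = ‖a ^ n * a ^ (2 ^ k - n)‖ := by rw [← pow_add, Nat.add_sub_cancel' hk]
      _ ≤ ‖a ^ n‖ * ‖a ^ (2 ^ k - n)‖ := norm_mul_le _ _
      _ ≤ ‖a ^ n‖ * ‖a‖ ^ (2 ^ k - n) := by
          have := norm_pow_le' a hz
          have h' := norm_nonneg (a ^ n)
          nlinarith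
  have hpos : (0:ℝ) < ‖a‖ ^ (2 ^ k - n) :=
    pow_pos (norm_pos_iff.mpr h0) _
  exact le_of_mul_le_mul_right key hpos

lemma idem_mem_range_iff {R : H →L[ℂ] H} (h : R ∘L R = R) {x : H} :
    x ∈ LinearMap.range (R : H →ₗ[ℂ] H) ↔ R x = x := by
  constructor
  · rintro ⟨y, rfl⟩
    have := congrArg (fun T : H →L[ℂ] H => T y) h
    simpa using this
  · intro hx; exact ⟨x, hx⟩

lemma sa_inner {R : H →L[ℂ] H} (h : IsSelfAdjoint R) (x y : H) :
    ⟪R x, y⟫ = ⟪x, R y⟫ := h.isSymmetric x y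

lemma idem_sa_orth_range_iff {R : H →L[ℂ] H} (h1 : R ∘L R = R) (h2 : IsSelfAdjoint R) {x : H} :
    x ∈ (LinearMap.range (R : H →ₗ[ℂ] H))ᗮ ↔ R x = 0 := by
  have hRRx : R (R x) = R x := by
    have := congrArg (fun T : H →L[ℂ] H => T x) h1; simpa using this
  constructor
  · intro hx
    have hz : ⟪R x, x⟫ = 0 := hx (R x) ⟨x, rfl⟩
    have h0 : ⟪R x, R x⟫ = 0 := by
      calc ⟪R x, R x⟫ = ⟪x, R (R x)⟫ := sa_inner h2 _ _
        _ = ⟪x, R x⟫ := by rw [hRRx]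
        _ = 0 := inner_eq_zero_symm.mpr hz
    exact inner_self_eq_zero.mp h0
  · intro hx y hy
    obtain ⟨z, rfl⟩ := hy
    exact (sa_inner h2 z x).trans (by rw [hx, inner_zero_right])

lemma idem_sa_norm_apply_le {R : H →L[ℂ] H} (h1 : R ∘L R = R) (h2 : IsSelfAdjoint R) (z : H) :
    ‖R z‖ ≤ ‖z‖ := by
  have hRR : R (R z) = R z := by
    have := congrArg (fun T : H →L[ℂ] H => T z) h1; simpa using this
  have h0 : (‖R z‖ : ℝ) ^ 2 = ‖⟪R z, R z⟫‖ := by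
    rw [inner_self_eq_norm_sq_to_K]; push_cast; simp [sq, abs_of_nonneg]
  have h3 : ⟪R z, R z⟫ = ⟪z, R z⟫ := by rw [sa_inner h2, hRR]
  have h4 : ‖⟪z, R z⟫‖ ≤ ‖z‖ * ‖R z‖ := norm_inner_le_norm _ _
  have h5 : ‖⟪R z, R z⟫‖ = ‖⟪z, R z⟫‖ := by rw [h3]
  nlinarith [norm_nonneg (R z), norm_nonneg z]

lemma proj_pow_mul {M : Type*} [Monoid M] {p q : M} (hp : p * p = p) (hq : q * q = q) :
    ∀ k : ℕ, (p * q) ^ (k + 1) * (q * p) ^ (k + 1) = (p * q * p) ^ (2 * k + 1) := by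
  have hpA : p * (p * q * p) = p * q * p := by
    rw [show p * (p * q * p) = p * p * q * p by simp [mul_assoc], hp]
  have hAp : (p * q * p) * p = p * q * p := by
    rw [mul_assoc (p * q) p p, hp]
  have h1 : ∀ j : ℕ, p * (p * q * p) ^ (j + 1) = (p * q * p) ^ (j + 1) := fun j => by
    rw [pow_succ', ← mul_assoc, hpA]
  have h2 : ∀ j : ℕ, (p * q * p) ^ (j + 1) * p = (p * q * p) ^ (j + 1) := fun j => by
    rw [pow_succ, mul_assoc, hAp]
  intro k
  induction k with
  | zero =>
    norm_num
    rw [show (p * q) * (q * p) = p * (q * q) * p by simp [mul_assoc], hq]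
  | succ k ih =>
    have e1 : (p * q) ^ (k + 1 + 1) = (p * q) * (p * q) ^ (k + 1) := by rw [← pow_succ']
    have e2 : (q * p) ^ (k + 1 + 1) = (q * p) ^ (k + 1) * (q * p) := by rw [← pow_succ]
    have e3 : (p * q * p) ^ (2 * (k + 1) + 1)
        = (p * q * p) * ((p * q * p) ^ (2 * k + 1) * (p * q * p)) := by
      rw [show 2 * (k + 1) + 1 = (2 * k + 1) + 1 + 1 by ring, pow_succ, pow_succ', mul_assoc]
    calc (p * q) ^ (k + 1 + 1) * (q * p) ^ (k + 1 + 1)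
        = (p * q) * ((p * q) ^ (k + 1) * (q * p) ^ (k + 1)) * (q * p) := by
          rw [e1, e2]; simp [mul_assoc]
      _ = (p * q) * (p * q * p) ^ (2 * k + 1) * (q * p) := by rw [ih]
      _ = (p * q) * ((p * ((p * q * p) ^ (2 * k + 1) * p)) * (q * p)) := by
          rw [h2 (2 * k), h1 (2 * k), mul_assoc]
      _ = (p * q * p) * ((p * q * p) ^ (2 * k + 1) * (p * q * p)) := by
          simp [mul_assoc]
      _ = (p * q * p) ^ (2 * (k + 1) + 1) := e3.symm

lemma sSup_eq_opNorm (p q : H →L[ℂ] H) (hp1 : p ∘L p = p) (hp2 : IsSelfAdjoint p)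
    (hq1 : q ∘L q = q) (hq2 : IsSelfAdjoint q) :
    sSup {r : ℝ | ∃ x, p x = x ∧ ∃ y, q y = y ∧ ‖x‖ = 1 ∧ ‖y‖ = 1 ∧ r = ‖⟪x, y⟫‖}
      = ‖p ∘L q‖ := by
  set S := {r : ℝ | ∃ x, p x = x ∧ ∃ y, q y = y ∧ ‖x‖ = 1 ∧ ‖y‖ = 1 ∧ r = ‖⟪x, y⟫‖} with hS
  have hub : ∀ r ∈ S, r ≤ ‖p ∘L q‖ := by
    rintro r ⟨x, hx, y, hy, hx1, hy1, rfl⟩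
    have hxy : ⟪x, y⟫ = ⟪x, (p ∘L q) y⟫ := by
      rw [comp_apply, hy, ← sa_inner hp2, hx]
    rw [hxy]
    calc ‖⟪x, (p ∘L q) y⟫‖ ≤ ‖x‖ * ‖(p ∘L q) y‖ := norm_inner_le_norm _ _
      _ ≤ ‖x‖ * (‖p ∘L q‖ * ‖y‖) := by gcongr; exact le_opNorm _ _
      _ = ‖p ∘L q‖ := by rw [hx1, hy1]; ring
  have hS0 : 0 ≤ sSup S :=
    Real.sSup_nonneg (by rintro r ⟨x, hx, y, hy, _, _, rfl⟩; exact norm_nonneg _)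
  refine le_antisymm (Real.sSup_le hub (norm_nonneg _)) ?_
  refine opNorm_le_bound _ hS0 fun z => ?_
  by_cases hz : p (q z) = 0
  · simp only [comp_apply, hz, norm_zero]
    positivity
  · have hqz : q z ≠ 0 := fun h => hz (by rw [h, map_zero])
    set w := q z with hw
    set u := p w with huu
    have hu : u ≠ 0 := hz
    have hpu : p u = u := by
      have := congrArg (fun T : H →L[ℂ] H => T w) hp1; simpa using this
    have hqw : q w = w := by
      have := congrArg (fun T : H →L[ℂ] H => T z) hq1; simpa [← hw] using this
    have hu0 : (0:ℝ) < ‖u‖ := norm_pos_iff.mpr hu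
    have hw0 : (0:ℝ) < ‖w‖ := norm_pos_iff.mpr hqz
    set x := ((‖u‖:ℂ))⁻¹ • u with hxd
    set y := ((‖w‖:ℂ))⁻¹ • w with hyd
    have hpx : p x = x := by rw [hxd, map_smul, hpu]
    have hqy : q y = y := by rw [hyd, map_smul, hqw]
    have hx1 : ‖x‖ = 1 := by
      rw [hxd, norm_smul]
      simp [hu0.ne']
    have hy1 : ‖y‖ = 1 := by
      rw [hyd, norm_smul]
      simp [hw0.ne']
    have hmem : ‖⟪x, y⟫‖ ∈ S := ⟨x, hpx, y, hqy, hx1, hy1, rfl⟩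
    have hle : ‖⟪x, y⟫‖ ≤ sSup S := le_csSup ⟨_, hub⟩ hmem
    have hiu : ⟪u, w⟫ = (‖u‖:ℂ) ^ 2 := by
      calc ⟪u, w⟫ = ⟪p u, w⟫ := by rw [hpu]
        _ = ⟪u, p w⟫ := sa_inner hp2 _ _
        _ = ⟪u, u⟫ := by rw [← huu]
        _ = (‖u‖:ℂ) ^ 2 := by
            rw [inner_self_eq_norm_sq_to_K]; norm_cast
    have hval : ‖⟪x, y⟫‖ = ‖u‖ / ‖w‖ := by
      rw [hxd, hyd, inner_smul_left, inner_smul_right, hiu]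
      simp only [map_inv₀, Complex.conj_ofReal, norm_mul, norm_inv, norm_pow,
        Complex.norm_real, Real.norm_eq_abs, abs_of_nonneg (norm_nonneg u),
        abs_of_nonneg (norm_nonneg w)]
      field_simp
    have hwz : ‖w‖ ≤ ‖z‖ := idem_sa_norm_apply_le hq1 hq2 z
    have : ‖(p ∘L q) z‖ = (‖u‖ / ‖w‖) * ‖w‖ := by
      rw [comp_apply, ← hw, ← huu]
      field_simp
    rw [this]
    calc (‖u‖ / ‖w‖) * ‖w‖ ≤ sSup S * ‖z‖ := by
          apply mul_le_mul (hval ▸ hle) hwz hw0.le hS0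

/-- Kayalar–Weinert: for orthogonal projections `P, Q`,
`‖(PQ)^k − P∧Q‖ = c(R(P), R(Q))^{2k−1}` for every `k ≥ 1`, where `P∧Q` is the
orthogonal projection onto `R(P) ∩ R(Q)`. -/
theorem stmt15 (P Q Pmeet : H →L[ℂ] H)
    (hP1 : P ∘L P = P) (hP2 : IsSelfAdjoint P)
    (hQ1 : Q ∘L Q = Q) (hQ2 : IsSelfAdjoint Q)
    (hm1 : Pmeet ∘L Pmeet = Pmeet) (hm2 : IsSelfAdjoint Pmeet)
    (hm3 : LinearMap.range (Pmeet : H →ₗ[ℂ] H) = LinearMap.range (P : H →ₗ[ℂ] H) ⊓ LinearMap.range (Q : H →ₗ[ℂ] H)) :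
    ∀ k : ℕ, 1 ≤ k →
      ‖(P * Q) ^ k - Pmeet‖ = cosAngle (LinearMap.range (P : H →ₗ[ℂ] H)) (LinearMap.range (Q : H →ₗ[ℂ] H)) ^ (2 * k - 1) := by
  intro k hk
  have hPP : P * P = P := hP1
  have hQQ : Q * Q = Q := hQ1
  have hEE : Pmeet * Pmeet = Pmeet := hm1
  have hPE : P * Pmeet = Pmeet := by
    ext x
    have hx : Pmeet x ∈ LinearMap.range (P : H →ₗ[ℂ] H) := by
      have h : Pmeet x ∈ LinearMap.range (Pmeet : H →ₗ[ℂ] H) := ⟨x, rfl⟩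
      rw [hm3] at h; exact h.1
    simpa [ContinuousLinearMap.mul_apply] using (idem_mem_range_iff hP1).mp hx
  have hQE : Q * Pmeet = Pmeet := by
    ext x
    have hx : Pmeet x ∈ LinearMap.range (Q : H →ₗ[ℂ] H) := by
      have h : Pmeet x ∈ LinearMap.range (Pmeet : H →ₗ[ℂ] H) := ⟨x, rfl⟩
      rw [hm3] at h; exact h.2
    simpa [ContinuousLinearMap.mul_apply] using (idem_mem_range_iff hQ1).mp hx
  have hEP : Pmeet * P = Pmeet := by
    have h := congrArg star hPE
    rwa [star_mul, hP2.star_eq, hm2.star_eq] at h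
  have hEQ : Pmeet * Q = Pmeet := by
    have h := congrArg star hQE
    rwa [star_mul, hQ2.star_eq, hm2.star_eq] at h
  set P' := P - Pmeet with hP'def
  set Q' := Q - Pmeet with hQ'def
  have hP'1 : P' * P' = P' := by
    have h : (P - Pmeet) * (P - Pmeet)
        = P * P - P * Pmeet - (Pmeet * P - Pmeet * Pmeet) := by noncomm_ring
    rw [hP'def, h, hPP, hPE, hEP, hEE]; abel
  have hQ'1 : Q' * Q' = Q' := by
    have h : (Q - Pmeet) * (Q - Pmeet)
        = Q * Q - Q * Pmeet - (Pmeet * Q - Pmeet * Pmeet) := by noncomm_ring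
    rw [hQ'def, h, hQQ, hQE, hEQ, hEE]; abel
  have hP'2 : IsSelfAdjoint P' := hP2.sub hm2
  have hQ'2 : IsSelfAdjoint Q' := hQ2.sub hm2
  have hQ'E : Q' * Pmeet = 0 := by rw [hQ'def, sub_mul, hQE, hEE, sub_self]
  have hEP' : Pmeet * P' = 0 := by rw [hP'def, mul_sub, hEP, hEE, sub_self]
  set T := P' * Q' with hT
  have hPQ : P * Q = T + Pmeet := by
    have h : (P - Pmeet) * (Q - Pmeet)
        = P * Q - P * Pmeet - (Pmeet * Q - Pmeet * Pmeet) := by noncomm_ring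
    rw [hT, hP'def, hQ'def, h, hPE, hEQ, hEE]; abel
  have hTE : T * Pmeet = 0 := by rw [hT, mul_assoc, hQ'E, mul_zero]
  have hET : Pmeet * T = 0 := by rw [hT, ← mul_assoc, hEP', zero_mul]
  have hpow : ∀ j : ℕ, (P * Q) ^ (j + 1) = T ^ (j + 1) + Pmeet := by
    intro j
    induction j with
    | zero => simpa using hPQ
    | succ j ih =>
      have hTjE : T ^ (j + 1) * Pmeet = 0 := by rw [pow_succ, mul_assoc, hTE, mul_zero]
      calc (P * Q) ^ (j + 1 + 1) = (T ^ (j + 1) + Pmeet) * (T + Pmeet) := by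
            rw [pow_succ, ih, hPQ]
        _ = T ^ (j + 1) * T + T ^ (j + 1) * Pmeet + (Pmeet * T + Pmeet * Pmeet) := by
            noncomm_ring
        _ = T ^ (j + 1 + 1) + Pmeet := by rw [hTjE, hET, hEE, ← pow_succ]; abel
  obtain ⟨k', rfl⟩ : ∃ k', k = k' + 1 := ⟨k - 1, by omega⟩
  have hdiff : (P * Q) ^ (k' + 1) - Pmeet = T ^ (k' + 1) := by rw [hpow k']; abel
  have hB_sa : IsSelfAdjoint (Q' * P' * Q') := by
    have : star (Q' * P' * Q') = Q' * P' * Q' := by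
      simp only [star_mul, hP'2.star_eq, hQ'2.star_eq, mul_assoc]
    exact this
  have hTsq : ‖T ^ (k' + 1)‖ ^ 2 = ‖(Q' * P' * Q') ^ (2 * k' + 1)‖ := by
    have h1 : ‖star (T ^ (k' + 1)) * T ^ (k' + 1)‖ = ‖T ^ (k' + 1)‖ ^ 2 := by
      rw [CStarRing.norm_star_mul_self]; ring
    have h2 : star (T ^ (k' + 1)) * T ^ (k' + 1)
        = (Q' * P') ^ (k' + 1) * (P' * Q') ^ (k' + 1) := by
      rw [star_pow, hT, star_mul, hP'2.star_eq, hQ'2.star_eq]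
    rw [← h1, h2, proj_pow_mul hQ'1 hP'1 k']
  have hBnorm : ‖(Q' * P' * Q') ^ (2 * k' + 1)‖ = ‖Q' * P' * Q'‖ ^ (2 * k' + 1) :=
    sa_norm_pow hB_sa (by omega)
  have hBT : ‖Q' * P' * Q'‖ = ‖T‖ ^ 2 := by
    have h : Q' * P' * Q' = star T * T := by
      rw [hT, star_mul, hP'2.star_eq, hQ'2.star_eq]
      calc Q' * P' * Q' = Q' * (P' * P') * Q' := by rw [hP'1]
        _ = Q' * P' * (P' * Q') := by simp [mul_assoc]
    rw [h, CStarRing.norm_star_mul_self]; ring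
  have hfinal : ‖T ^ (k' + 1)‖ = ‖T‖ ^ (2 * k' + 1) := by
    have h : ‖T ^ (k' + 1)‖ ^ 2 = (‖T‖ ^ (2 * k' + 1)) ^ 2 := by
      rw [hTsq, hBnorm, hBT]; ring
    calc ‖T ^ (k' + 1)‖ = Real.sqrt (‖T ^ (k' + 1)‖ ^ 2) := (Real.sqrt_sq (norm_nonneg _)).symm
      _ = Real.sqrt ((‖T‖ ^ (2 * k' + 1)) ^ 2) := by rw [h]
      _ = ‖T‖ ^ (2 * k' + 1) := Real.sqrt_sq (by positivity)
  have hmemP : ∀ x : H,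
      x ∈ LinearMap.range (P : H →ₗ[ℂ] H) ⊓ (LinearMap.range (P : H →ₗ[ℂ] H) ⊓ LinearMap.range (Q : H →ₗ[ℂ] H))ᗮ ↔ P' x = x := by
    intro x
    rw [Submodule.mem_inf, idem_mem_range_iff hP1, ← hm3, idem_sa_orth_range_iff hm1 hm2]
    constructor
    · rintro ⟨h1, h2⟩
      simp [hP'def, ContinuousLinearMap.sub_apply, h1, h2]
    · intro h
      have h2 : Pmeet x = 0 := by
        have h3 := congrArg (fun T : H →L[ℂ] H => T x) hEP'
        simp only [ContinuousLinearMap.mul_apply, ContinuousLinearMap.zero_apply] at h3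
        rw [← h]; exact h3
      have h1 : P x = x := by
        have := h
        rw [hP'def] at this
        simp only [ContinuousLinearMap.sub_apply, h2, sub_zero] at this
        exact this
      exact ⟨h1, h2⟩
  have hmemQ : ∀ y : H,
      y ∈ LinearMap.range (Q : H →ₗ[ℂ] H) ⊓ (LinearMap.range (P : H →ₗ[ℂ] H) ⊓ LinearMap.range (Q : H →ₗ[ℂ] H))ᗮ ↔ Q' y = y := by
    intro y
    rw [Submodule.mem_inf, idem_mem_range_iff hQ1, ← hm3, idem_sa_orth_range_iff hm1 hm2]
    constructor
    · rintro ⟨h1, h2⟩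
      simp [hQ'def, ContinuousLinearMap.sub_apply, h1, h2]
    · intro h
      have h2 : Pmeet y = 0 := by
        have hEQ' : Pmeet * Q' = 0 := by rw [hQ'def, mul_sub, hEQ, hEE, sub_self]
        have h3 := congrArg (fun T : H →L[ℂ] H => T y) hEQ'
        simp only [ContinuousLinearMap.mul_apply, ContinuousLinearMap.zero_apply] at h3
        rw [← h]; exact h3
      have h1 : Q y = y := by
        have := h
        rw [hQ'def] at this
        simp only [ContinuousLinearMap.sub_apply, h2, sub_zero] at this
        exact this
      exact ⟨h1, h2⟩
  have hP'c : P' ∘L P' = P' := hP'1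
  have hQ'c : Q' ∘L Q' = Q' := hQ'1
  have hcos : cosAngle (LinearMap.range (P : H →ₗ[ℂ] H)) (LinearMap.range (Q : H →ₗ[ℂ] H)) = ‖T‖ := by
    rw [cosAngle]
    have hset : {r : ℝ | ∃ x ∈ LinearMap.range (P : H →ₗ[ℂ] H) ⊓ (LinearMap.range (P : H →ₗ[ℂ] H) ⊓ LinearMap.range (Q : H →ₗ[ℂ] H))ᗮ,
        ∃ y ∈ LinearMap.range (Q : H →ₗ[ℂ] H) ⊓ (LinearMap.range (P : H →ₗ[ℂ] H) ⊓ LinearMap.range (Q : H →ₗ[ℂ] H))ᗮ,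
        ‖x‖ = 1 ∧ ‖y‖ = 1 ∧ r = ‖(inner ℂ x y : ℂ)‖}
        = {r : ℝ | ∃ x, P' x = x ∧ ∃ y, Q' y = y ∧ ‖x‖ = 1 ∧ ‖y‖ = 1 ∧ r = ‖⟪x, y⟫‖} := by
      ext r
      constructor
      · rintro ⟨x, hx, y, hy, h⟩
        exact ⟨x, (hmemP x).mp hx, y, (hmemQ y).mp hy, h⟩
      · rintro ⟨x, hx, y, hy, h⟩
        exact ⟨x, (hmemP x).mpr hx, y, (hmemQ y).mpr hy, h⟩
    rw [hset, sSup_eq_opNorm P' Q' hP'c hP'2 hQ'c hQ'2]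
    rw [hT, ContinuousLinearMap.mul_def]
  have hexp : 2 * (k' + 1) - 1 = 2 * k' + 1 := by omega
  rw [hdiff, hfinal, hcos, hexp]
end

section
/- Let A ∈ L(ℓ², H) have closed range and let D be a positive invertible operator on ℓ² which is diagonal in the canonical basis. Then χ_D(A) := D^{−1/2}(A D^{−1/2})† is a generalized inverse of A (i.e., A χ_D(A) A = A and χ_D(A) A χ_D(A) = χ_D(A)), and χ_D(A)·A is the projection onto N(A)^{⊥_D} along N(A), which is orthogonal with respect to the inner product ⟨x,y⟩_D = ⟨Dx, y⟩. -/
open ContinuousLinearMap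
open scoped Classical

variable {H : Type*} [NormedAddCommGroup H] [InnerProductSpace ℂ H] [CompleteSpace H]

/-- The Moore–Penrose pseudoinverse (via choice; `0` if it does not exist). -/
noncomputable def pinv {E F : Type*} [NormedAddCommGroup E] [InnerProductSpace ℂ E]
    [CompleteSpace E] [NormedAddCommGroup F] [InnerProductSpace ℂ F] [CompleteSpace F]
    (A : E →L[ℂ] F) : F →L[ℂ] E :=
  if h : ∃ B : F →L[ℂ] E, A ∘L B ∘L A = A ∧ B ∘L A ∘L B = B ∧
      IsSelfAdjoint (A ∘L B) ∧ IsSelfAdjoint (B ∘L A)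
  then h.choose else 0

section MP
variable {E F : Type*} [NormedAddCommGroup E] [InnerProductSpace ℂ E] [CompleteSpace E]
  [NormedAddCommGroup F] [InnerProductSpace ℂ F] [CompleteSpace F]

theorem mp_exists (A : E →L[ℂ] F)
    (hA : IsClosed ((LinearMap.range (A : E →ₗ[ℂ] F) : Submodule ℂ F) : Set F)) :
    ∃ B : F →L[ℂ] E, A ∘L B ∘L A = A ∧ B ∘L A ∘L B = B ∧
      IsSelfAdjoint (A ∘L B) ∧ IsSelfAdjoint (B ∘L A) := by
  haveI hker : CompleteSpace (LinearMap.ker (A : E →ₗ[ℂ] F)) := (ContinuousLinearMap.isClosed_ker A).completeSpace_coe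
  set K : Submodule ℂ E := (LinearMap.ker (A : E →ₗ[ℂ] F))ᗮ with hK
  set R : Submodule ℂ F := LinearMap.range (A : E →ₗ[ℂ] F) with hR
  haveI : CompleteSpace R := hA.completeSpace_coe
  haveI : CompleteSpace K := (Submodule.isClosed_orthogonal _).completeSpace_coe
  have hmem : ∀ x : K, (A ∘L K.subtypeL) x ∈ R := fun x => LinearMap.mem_range_self _ _
  set Ahat : K →L[ℂ] R := (A ∘L K.subtypeL).codRestrict R hmem with hAhat
  -- injective
  have hinj : LinearMap.ker (Ahat : K →ₗ[ℂ] R) = ⊥ := by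
    rw [Submodule.eq_bot_iff]
    rintro ⟨x, hx⟩ h
    have hx0 : A x = 0 := congrArg Subtype.val (h : Ahat ⟨x, hx⟩ = 0)
    have : (inner ℂ x x : ℂ) = 0 := hx x (LinearMap.mem_ker.mpr hx0)
    have : x = 0 := by rwa [inner_self_eq_zero] at this
    exact Subtype.ext this
  have hsurj : LinearMap.range (Ahat : K →ₗ[ℂ] R) = ⊤ := by
    rw [Submodule.eq_top_iff']
    rintro ⟨y, x, rfl⟩
    refine ⟨⟨x - (Submodule.orthogonalProjectionOnto (LinearMap.ker (A : E →ₗ[ℂ] F)) x : E),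
      Submodule.sub_starProjection_mem_orthogonal x⟩, ?_⟩
    apply Subtype.ext
    show A (x - (Submodule.orthogonalProjectionOnto (LinearMap.ker (A : E →ₗ[ℂ] F)) x : E)) = A x
    have : A ((Submodule.orthogonalProjectionOnto (LinearMap.ker (A : E →ₗ[ℂ] F)) x : E)) = 0 :=
      (Submodule.orthogonalProjectionOnto (LinearMap.ker (A : E →ₗ[ℂ] F)) x).2
    rw [map_sub, this, sub_zero]
  set e := ContinuousLinearEquiv.ofBijective Ahat hinj hsurj with he
  set B : F →L[ℂ] E := K.subtypeL ∘L ((e.symm : R →L[ℂ] K) ∘L Submodule.orthogonalProjectionOnto R) with hB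
  have ha : ∀ y : F, A (B y) = (Submodule.orthogonalProjectionOnto R y : F) := by
    intro y
    show A ((e.symm (Submodule.orthogonalProjectionOnto R y) : K) : E) = _
    have : ∀ z : K, A (z : E) = (Ahat z : F) := fun z => rfl
    rw [this]
    congr 1
    show Ahat (e.symm (Submodule.orthogonalProjectionOnto R y)) = Submodule.orthogonalProjectionOnto R y
    have : Ahat (e.symm (Submodule.orthogonalProjectionOnto R y)) = e (e.symm (Submodule.orthogonalProjectionOnto R y)) := rfl
    rw [this, e.apply_symm_apply]
  have hAPK : ∀ x : E, A ((Submodule.orthogonalProjectionOnto K x : E)) = A x := by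
    intro x
    have hmem2 : x - (Submodule.orthogonalProjectionOnto K x : E) ∈ LinearMap.ker (A : E →ₗ[ℂ] F) := by
      have h2 := Submodule.sub_starProjection_mem_orthogonal (K := K) x
      simpa [hK, Submodule.orthogonal_orthogonal] using h2
    have : A (x - (Submodule.orthogonalProjectionOnto K x : E)) = 0 := hmem2
    rw [map_sub, sub_eq_zero] at this
    exact this.symm
  have hb : ∀ x : E, B (A x) = (Submodule.orthogonalProjectionOnto K x : E) := by
    intro x
    have h1 : Submodule.orthogonalProjectionOnto R (A x) = ⟨A x, LinearMap.mem_range_self _ x⟩ :=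
      Subtype.ext (Submodule.starProjection_eq_self_iff.mpr (LinearMap.mem_range_self _ x))
    show ((e.symm (Submodule.orthogonalProjectionOnto R (A x)) : K) : E) = _
    rw [h1]
    congr 1
    apply e.symm_apply_eq.mpr
    apply Subtype.ext
    show A x = A ((Submodule.orthogonalProjectionOnto K x : E))
    exact (hAPK x).symm
  refine ⟨B, ?_, ?_, ?_, ?_⟩
  · ext x
    show A (B (A x)) = A x
    rw [hb x]; exact hAPK x
  · ext y
    show B (A (B y)) = B y
    rw [hb (B y)]
    exact Submodule.starProjection_eq_self_iff.mpr
      (SetLike.coe_mem (e.symm (Submodule.orthogonalProjectionOnto R y)))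
  · have : A ∘L B = R.subtypeL ∘L Submodule.orthogonalProjectionOnto R := by
      ext y; exact ha y
    rw [this]; exact isSelfAdjoint_starProjection R
  · have : B ∘L A = K.subtypeL ∘L Submodule.orthogonalProjectionOnto K := by
      ext x; exact hb x
    rw [this]; exact isSelfAdjoint_starProjection K

end MP

theorem pinv_spec {E F : Type*} [NormedAddCommGroup E] [InnerProductSpace ℂ E]
    [CompleteSpace E] [NormedAddCommGroup F] [InnerProductSpace ℂ F] [CompleteSpace F]
    (A : E →L[ℂ] F)
    (hA : IsClosed ((LinearMap.range (A : E →ₗ[ℂ] F) : Submodule ℂ F) : Set F)) :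
    A ∘L pinv A ∘L A = A ∧ pinv A ∘L A ∘L pinv A = pinv A ∧
      IsSelfAdjoint (A ∘L pinv A) ∧ IsSelfAdjoint (pinv A ∘L A) := by
  have h := mp_exists A hA
  rw [pinv, dif_pos h]
  exact h.choose_spec

/-- For `A` with closed range and `D` positive, invertible and diagonal,
`χ_D(A) = D^{-1/2}(A D^{-1/2})†` is a generalized inverse of `A`, and `χ_D(A)·A` is the
projection onto `N(A)^{⊥_D}` along `N(A)`, orthogonal for the inner product `⟨Dx, y⟩`. -/
theorem stmt17 (A : lp (fun _ : ℕ => ℂ) 2 →L[ℂ] H)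
    (hA : IsClosed ((LinearMap.range (A : lp (fun _ : ℕ => ℂ) 2 →ₗ[ℂ] H) : Submodule ℂ H) : Set H))
    (D Dinv Droot : lp (fun _ : ℕ => ℂ) 2 →L[ℂ] lp (fun _ : ℕ => ℂ) 2)
    (hDpos : D.IsPositive)
    (hDdiag : ∀ n : ℕ, ∃ d : ℂ, D (lp.single 2 n 1) = d • lp.single 2 n 1)
    (hDinv1 : D ∘L Dinv = 1) (hDinv2 : Dinv ∘L D = 1)
    (hroot : Droot.IsPositive) (hroot2 : Droot ∘L Droot = Dinv)
    (χ : H →L[ℂ] lp (fun _ : ℕ => ℂ) 2) (hχ : χ = Droot ∘L pinv (A ∘L Droot)) :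
    A ∘L χ ∘L A = A
    ∧ χ ∘L A ∘L χ = χ
    ∧ (χ ∘L A) ∘L (χ ∘L A) = χ ∘L A
    ∧ LinearMap.ker ((χ ∘L A : lp (fun _ : ℕ => ℂ) 2 →L[ℂ] lp (fun _ : ℕ => ℂ) 2) : lp (fun _ : ℕ => ℂ) 2 →ₗ[ℂ] lp (fun _ : ℕ => ℂ) 2) = LinearMap.ker (A : lp (fun _ : ℕ => ℂ) 2 →ₗ[ℂ] H)
    ∧ Set.range ⇑(χ ∘L A)
        = {z : lp (fun _ : ℕ => ℂ) 2 | ∀ x, A x = 0 → (inner ℂ (D x) z : ℂ) = 0}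
    ∧ (∀ x y : lp (fun _ : ℕ => ℂ) 2,
        (inner ℂ (D ((χ ∘L A) x)) y : ℂ) = (inner ℂ (D x) ((χ ∘L A) y) : ℂ)) := by
  subst hχ
  set S : lp (fun _ : ℕ => ℂ) 2 →L[ℂ] H := A ∘L Droot with hS
  -- pointwise versions of the hypotheses
  have hroot2' : ∀ x, Droot (Droot x) = Dinv x := fun x => ContinuousLinearMap.ext_iff.mp hroot2 x
  have hDinv1' : ∀ x, D (Dinv x) = x := fun x => ContinuousLinearMap.ext_iff.mp hDinv1 x
  have hDinv2' : ∀ x, Dinv (D x) = x := fun x => ContinuousLinearMap.ext_iff.mp hDinv2 x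
  -- commutation of Droot and D
  have hTDinv : ∀ x, Droot (Dinv x) = Dinv (Droot x) := by
    intro x
    rw [← hroot2' x, hroot2' (Droot x)]
  have hTD : ∀ x, Droot (D x) = D (Droot x) := by
    intro x
    have h1 : Droot (Dinv (D x)) = Dinv (Droot (D x)) := hTDinv (D x)
    rw [hDinv2' x] at h1
    have := congrArg D h1
    rw [hDinv1' (Droot (D x))] at this
    exact this.symm
  have hTinv1 : ∀ x, Droot (D (Droot x)) = x := by
    intro x
    rw [hTD (Droot x), hroot2' x, hDinv1' x]
  -- symmetry
  have hDsym := hDpos.1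
  have hTsym := hroot.1
  -- S has closed range
  have hrangeS : LinearMap.range (S : lp (fun _ : ℕ => ℂ) 2 →ₗ[ℂ] H) = LinearMap.range (A : lp (fun _ : ℕ => ℂ) 2 →ₗ[ℂ] H) := by
    apply le_antisymm
    · rintro _ ⟨x, rfl⟩; exact ⟨Droot x, rfl⟩
    · rintro _ ⟨x, rfl⟩
      exact ⟨D (Droot x), by show A (Droot (D (Droot x))) = A x; rw [hTinv1]⟩
  have hSclosed : IsClosed ((LinearMap.range (S : lp (fun _ : ℕ => ℂ) 2 →ₗ[ℂ] H) : Submodule ℂ H) : Set H) := by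
    rw [hrangeS]; exact hA
  obtain ⟨m1, m2, m3, m4⟩ := pinv_spec S hSclosed
  set B := pinv S with hB
  have m1' : ∀ x, S (B (S x)) = S x := fun x => ContinuousLinearMap.ext_iff.mp m1 x
  have m2' : ∀ x, B (S (B x)) = B x := fun x => ContinuousLinearMap.ext_iff.mp m2 x
  have m4sym := ContinuousLinearMap.isSelfAdjoint_iff_isSymmetric.mp m4
  have m4sym' : ∀ a b, (inner ℂ (B (S a)) b : ℂ) = inner ℂ a (B (S b)) := fun a b => m4sym a b
  -- A in terms of S
  have hAS : ∀ x, A x = S (Droot (D x)) := by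
    intro x
    show A x = A (Droot (Droot (D x)))
    rw [hroot2', hDinv2']
  -- generalized inverse property 1, pointwise
  have g1 : ∀ x, A (Droot (B (A x))) = A x := by
    intro x
    show S (B (A x)) = A x
    rw [hAS x]
    exact m1' _
  refine ⟨?_, ?_, ?_, ?_, ?_, ?_⟩
  · refine ContinuousLinearMap.ext fun x => ?_
    exact g1 x
  · refine ContinuousLinearMap.ext fun y => ?_
    show Droot (B (S (B y))) = Droot (B y)
    rw [m2']
  · refine ContinuousLinearMap.ext fun x => ?_
    show Droot (B (S (B (A x)))) = Droot (B (A x))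
    rw [m2']
  · apply Submodule.ext; intro x
    simp only [LinearMap.mem_ker]
    constructor
    · intro hx
      have hx' : Droot (B (A x)) = 0 := hx
      have := g1 x
      rw [hx', map_zero] at this
      exact this.symm
    · intro hx
      show Droot (B (A x)) = 0
      rw [show A x = 0 from hx, map_zero, map_zero]
  · ext z
    simp only [Set.mem_range, Set.mem_setOf_eq]
    constructor
    · rintro ⟨v, rfl⟩ x hx
      show (inner ℂ (D x) (Droot (B (A v))) : ℂ) = 0
      have hSx : S (Droot (D x)) = 0 := by rw [← hAS x]; exact hx
      calc (inner ℂ (D x) (Droot (B (A v))) : ℂ)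
          = inner ℂ (Droot (D x)) (B (A v)) := (hTsym _ _).symm
        _ = inner ℂ (Droot (D x)) (B (S (B (A v)))) := by rw [m2']
        _ = inner ℂ (B (S (Droot (D x)))) (B (A v)) := (m4sym' _ _).symm
        _ = 0 := by rw [hSx, map_zero, inner_zero_left]
    · intro hz
      refine ⟨z, ?_⟩
      show Droot (B (A z)) = z
      set u := D (Droot z) with hu
      have hzu : z = Droot u := (hTinv1 z).symm
      have hAz : A z = S u := by rw [hzu]; rfl
      have key : B (S u) = u := by
        have hSw : S (u - B (S u)) = 0 := by rw [map_sub, m1' u, sub_self]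
        have hAw : A (Droot (u - B (S u))) = 0 := hSw
        have hzw := hz (Droot (u - B (S u))) hAw
        rw [hzu] at hzw
        have h1 : (inner ℂ (u - B (S u)) u : ℂ) = 0 := by
          calc (inner ℂ (u - B (S u)) u : ℂ)
              = inner ℂ (Droot (D (Droot (u - B (S u))))) u := by rw [hTinv1]
            _ = inner ℂ (D (Droot (u - B (S u)))) (Droot u) := hTsym _ _
            _ = 0 := hzw
        have h2 : (inner ℂ (u - B (S u)) (B (S u)) : ℂ) = 0 := by
          rw [← m4sym' (u - B (S u)) u, hSw, map_zero, inner_zero_left]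
        have h3 : (inner ℂ (u - B (S u)) (u - B (S u)) : ℂ) = 0 := by
          rw [inner_sub_right, h1, h2, sub_zero]
        have h4 : u - B (S u) = 0 := inner_self_eq_zero.mp h3
        exact (sub_eq_zero.mp h4).symm
      rw [hAz, key, hu, hTinv1]
  · intro x y
    show (inner ℂ (D (Droot (B (A x)))) y : ℂ) = inner ℂ (D x) (Droot (B (A y)))
    have e1 : (inner ℂ (D (Droot (B (A x)))) y : ℂ) = inner ℂ (D (B (A x))) (Droot y) := by
      rw [← hTD (B (A x))]; exact hTsym _ _
    have e2 : (inner ℂ (D (B (A x))) (Droot y) : ℂ) = inner ℂ (B (A x)) (Droot (D y)) := by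
      rw [hTD y]; exact hDsym _ _
    have e3 : (inner ℂ (B (A x)) (Droot (D y)) : ℂ) = inner ℂ (Droot (D x)) (B (A y)) := by
      rw [hAS x, hAS y]; exact m4sym' _ _
    have e4 : (inner ℂ (Droot (D x)) (B (A y)) : ℂ) = inner ℂ (D x) (Droot (B (A y))) := hTsym _ _
    exact e1.trans (e2.trans (e3.trans e4))
end

section
/- Let T : ℓ² → W ⊆ H be the synthesis operator of a frame {f_n} for the closed subspace W, let M be a closed subspace with H = W ∔ M^⊥, let B ∈ L(ℓ², H) with R(B) = M, and let D be a positive invertible diagonal operator on ℓ². Set T̂ = B (D^{1/2} T* B)† D^{1/2}. Then T T̂* is the (oblique) projection onto W with kernel M^⊥; consequently {g_n} = {T̂ e_n} is an oblique dual frame of {f_n} in M, i.e., f = Σ_n ⟨f, g_n⟩ f_n for all f ∈ W. -/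
open ContinuousLinearMap
open scoped Classical
open scoped InnerProductSpace ComplexConjugate NNReal ENNReal

variable {H : Type*} [NormedAddCommGroup H] [InnerProductSpace ℂ H] [CompleteSpace H]

section PenroseAux

open scoped InnerProductSpace ComplexConjugate NNReal ENNReal

variable {E F : Type*} [NormedAddCommGroup E] [InnerProductSpace ℂ E]
    [CompleteSpace E] [NormedAddCommGroup F] [InnerProductSpace ℂ F] [CompleteSpace F]

lemma pinv_spec_s19 (A : E →L[ℂ] F)
    (h : ∃ B : F →L[ℂ] E, A ∘L B ∘L A = A ∧ B ∘L A ∘L B = B ∧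
      IsSelfAdjoint (A ∘L B) ∧ IsSelfAdjoint (B ∘L A)) :
    A ∘L pinv A ∘L A = A ∧ pinv A ∘L A ∘L pinv A = pinv A ∧
      IsSelfAdjoint (A ∘L pinv A) ∧ IsSelfAdjoint (pinv A ∘L A) := by
  rw [pinv, dif_pos h]
  exact h.choose_spec

/-- Existence of a Moore–Penrose pseudoinverse for a closed-range operator. -/
lemma exists_penrose_of_isClosed (A : E →L[ℂ] F)
    (h : IsClosed ((LinearMap.range (A : E →ₗ[ℂ] F) : Submodule ℂ F) : Set F)) :
    ∃ X : F →L[ℂ] E, A ∘L X ∘L A = A ∧ X ∘L A ∘L X = X ∧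
      IsSelfAdjoint (A ∘L X) ∧ IsSelfAdjoint (X ∘L A) := by
  set K : Submodule ℂ F := LinearMap.range (A : E →ₗ[ℂ] F) with hK
  haveI : CompleteSpace K := h.completeSpace_coe
  set N : Submodule ℂ E := (LinearMap.ker (A : E →ₗ[ℂ] F))ᗮ with hN
  haveI : CompleteSpace (LinearMap.ker (A : E →ₗ[ℂ] F)) := (ContinuousLinearMap.isClosed_ker A).completeSpace_coe
  have hNN : Nᗮ = LinearMap.ker (A : E →ₗ[ℂ] F) := Submodule.orthogonal_orthogonal _
  let A₁ : N →L[ℂ] K := (A.comp N.subtypeL).codRestrict K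
    (fun x => LinearMap.mem_range_self _ _)
  have hA₁ : ∀ x : N, (A₁ x : F) = A (x : E) := fun x => rfl
  have hker : LinearMap.ker (A₁ : N →ₗ[ℂ] K) = ⊥ := by
    rw [LinearMap.ker_eq_bot']
    intro m hm
    have h1 : (m : E) ∈ LinearMap.ker (A : E →ₗ[ℂ] F) := by
      have : A (m : E) = 0 := by
        have := congrArg (Subtype.val) hm
        simpa [hA₁] using this
      simpa [LinearMap.mem_ker] using this
    have h2 : (m : E) ∈ (LinearMap.ker (A : E →ₗ[ℂ] F))ᗮ := m.2
    have : ⟪(m : E), (m : E)⟫_ℂ = 0 :=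
      (Submodule.mem_orthogonal (LinearMap.ker (A : E →ₗ[ℂ] F)) (m : E)).mp h2 (m : E) h1
    exact Subtype.ext (by simpa using inner_self_eq_zero.mp this)
  have hAproj : ∀ x : E, A ((Submodule.orthogonalProjectionOnto N x : E)) = A x := by
    intro x
    have hsub : x - (Submodule.orthogonalProjectionOnto N x : E) ∈ Nᗮ :=
      Submodule.sub_starProjection_mem_orthogonal x
    rw [hNN, LinearMap.mem_ker, ContinuousLinearMap.coe_coe] at hsub
    have := map_sub A x (Submodule.orthogonalProjectionOnto N x : E)
    rw [hsub] at this
    exact (sub_eq_zero.mp this.symm).symm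
  have hrange : LinearMap.range (A₁ : N →ₗ[ℂ] K) = ⊤ := by
    rw [LinearMap.range_eq_top]
    rintro ⟨y, x, rfl⟩
    refine ⟨Submodule.orthogonalProjectionOnto N x, ?_⟩
    ext
    simp [hA₁, hAproj, -Submodule.coe_orthogonalProjectionOnto_apply]
  let e : N ≃L[ℂ] K := ContinuousLinearEquiv.ofBijective A₁ hker hrange
  have he : ∀ x : N, e x = A₁ x := fun x => rfl
  let X : F →L[ℂ] E := N.subtypeL ∘L (e.symm : K →L[ℂ] N) ∘L Submodule.orthogonalProjectionOnto K
  have hX1 : ∀ y : F, A (X y) = (Submodule.orthogonalProjectionOnto K y : F) := by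
    intro y
    have : X y = ((e.symm (Submodule.orthogonalProjectionOnto K y) : N) : E) := rfl
    rw [this, ← hA₁, ← he, e.apply_symm_apply]
  have hXN : ∀ y : F, X y ∈ N := fun y => (e.symm (Submodule.orthogonalProjectionOnto K y)).2
  have hX2 : ∀ x : E, X (A x) = (Submodule.orthogonalProjectionOnto N x : E) := by
    intro x
    have hmem : A x ∈ K := LinearMap.mem_range_self _ _
    have hproj : Submodule.orthogonalProjectionOnto K (A x) = ⟨A x, hmem⟩ :=
      Submodule.orthogonalProjectionOnto_mem_subspace_eq_self (⟨A x, hmem⟩ : K)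
    have hsymm : e.symm ⟨A x, hmem⟩ = Submodule.orthogonalProjectionOnto N x := by
      rw [ContinuousLinearEquiv.symm_apply_eq]
      ext
      simp [he, hA₁, hAproj, -Submodule.coe_orthogonalProjectionOnto_apply]
    show ((e.symm (Submodule.orthogonalProjectionOnto K (A x)) : N) : E) = _
    rw [hproj, hsymm]
  refine ⟨X, ?_, ?_, ?_, ?_⟩
  · ext x
    simp only [comp_apply]
    rw [hX2, hAproj]
  · ext y
    simp only [comp_apply]
    rw [hX2]
    exact congrArg _ (Submodule.orthogonalProjectionOnto_mem_subspace_eq_self (⟨X y, hXN y⟩ : N))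
  · have : A ∘L X = K.subtypeL ∘L Submodule.orthogonalProjectionOnto K := by
      ext y; simp only [comp_apply]; rw [hX1]; rfl
    rw [this]
    exact isSelfAdjoint_starProjection K
  · have : X ∘L A = N.subtypeL ∘L Submodule.orthogonalProjectionOnto N := by
      ext x; simp only [comp_apply]; rw [hX2]; rfl
    rw [this]
    exact isSelfAdjoint_starProjection N

/-- Transfer of the Penrose equations to the adjoint. -/
lemma exists_penrose_adjoint (C : E →L[ℂ] F)
    (h : ∃ X : F →L[ℂ] E, C ∘L X ∘L C = C ∧ X ∘L C ∘L X = X ∧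
      IsSelfAdjoint (C ∘L X) ∧ IsSelfAdjoint (X ∘L C)) :
    ∃ X : E →L[ℂ] F, adjoint C ∘L X ∘L adjoint C = adjoint C ∧
      X ∘L adjoint C ∘L X = X ∧
      IsSelfAdjoint (adjoint C ∘L X) ∧ IsSelfAdjoint (X ∘L adjoint C) := by
  obtain ⟨X, h1, h2, h3, h4⟩ := h
  refine ⟨adjoint X, ?_, ?_, ?_, ?_⟩
  · have := congrArg ContinuousLinearMap.adjoint h1
    simpa only [adjoint_comp, comp_assoc] using this
  · have := congrArg ContinuousLinearMap.adjoint h2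
    simpa only [adjoint_comp, comp_assoc] using this
  · rw [← adjoint_comp X C, isSelfAdjoint_iff'.mp h4]
    exact h4
  · rw [← adjoint_comp C X, isSelfAdjoint_iff'.mp h3]
    exact h3

end PenroseAux

set_option maxHeartbeats 2000000 in
/-- Let `T` be the synthesis operator of a frame `{f_n}` for `W`, `M` a closed subspace with
`H = W ∔ M^⊥`, `B` an operator with `R(B) = M`, and `D` positive, invertible and diagonal.
With `T̂ = B (D^{1/2} T* B)† D^{1/2}`, the operator `T T̂*` is the oblique projection onto `W`
with kernel `M^⊥`, and `{g_n} = {T̂ e_n}` is an oblique dual frame of `{f_n}` in `M`: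
`f = Σ_n ⟨f, g_n⟩ f_n` for all `f ∈ W`. -/
theorem stmt19 (W M : Submodule ℂ H)
    (hW : IsClosed (W : Set H)) (hM : IsClosed (M : Set H))
    (hcompl : IsCompl W Mᗮ)
    (f : ℕ → H) (hfW : ∀ n, f n ∈ W)
    (A B : ℝ) (hA : 0 < A) (hB : 0 < B)
    (hframe : ∀ g ∈ W, A * ‖g‖ ^ 2 ≤ ∑' n, ‖(inner ℂ (f n) g : ℂ)‖ ^ 2 ∧
      ∑' n, ‖(inner ℂ (f n) g : ℂ)‖ ^ 2 ≤ B * ‖g‖ ^ 2)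
    (T : lp (fun _ : ℕ => ℂ) 2 →L[ℂ] H) (hT : ∀ n, T (lp.single 2 n 1) = f n)
    (hTrange : LinearMap.range (T : lp (fun _ : ℕ => ℂ) 2 →ₗ[ℂ] H) = W)
    (Bop : lp (fun _ : ℕ => ℂ) 2 →L[ℂ] H) (hBrange : LinearMap.range (Bop : lp (fun _ : ℕ => ℂ) 2 →ₗ[ℂ] H) = M)
    (D Droot : lp (fun _ : ℕ => ℂ) 2 →L[ℂ] lp (fun _ : ℕ => ℂ) 2)
    (hDpos : D.IsPositive)
    (hDdiag : ∀ n : ℕ, ∃ d : ℂ, D (lp.single 2 n 1) = d • lp.single 2 n 1)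
    (hDinv : ∃ Dinv, D ∘L Dinv = 1 ∧ Dinv ∘L D = 1)
    (hroot : Droot.IsPositive) (hroot2 : Droot ∘L Droot = D)
    (That : lp (fun _ : ℕ => ℂ) 2 →L[ℂ] H)
    (hThat : That = Bop ∘L pinv (Droot ∘L ContinuousLinearMap.adjoint T ∘L Bop) ∘L Droot)
    (Q : H →L[ℂ] H) (hQ : Q = T ∘L ContinuousLinearMap.adjoint That) :
    Q ∘L Q = Q
    ∧ LinearMap.range (Q : H →ₗ[ℂ] H) = W
    ∧ LinearMap.ker (Q : H →ₗ[ℂ] H) = Mᗮ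
    ∧ (∀ n, That (lp.single 2 n 1) ∈ M)
    ∧ ∀ g ∈ W, HasSum (fun n => (inner ℂ (That (lp.single 2 n 1)) g : ℂ) • f n) g := by
  classical
  obtain ⟨Dinv, hD1, hD2⟩ := hDinv
  have hDapp : ∀ z, Droot (Droot z) = D z := fun z => by
    have := ContinuousLinearMap.ext_iff.mp hroot2 z
    simpa using this
  have hDsurj : Function.Surjective Droot := by
    intro x
    refine ⟨Droot (Dinv x), ?_⟩
    rw [hDapp]
    have := ContinuousLinearMap.ext_iff.mp hD1 x
    simpa using this
  set R : lp (fun _ : ℕ => ℂ) 2 →L[ℂ] H := T ∘L Droot with hR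
  set Bs : H →L[ℂ] lp (fun _ : ℕ => ℂ) 2 := ContinuousLinearMap.adjoint Bop with hBs
  set Aop : lp (fun _ : ℕ => ℂ) 2 →L[ℂ] lp (fun _ : ℕ => ℂ) 2 :=
    Droot ∘L ContinuousLinearMap.adjoint T ∘L Bop with hAop
  set Cop : lp (fun _ : ℕ => ℂ) 2 →L[ℂ] lp (fun _ : ℕ => ℂ) 2 :=
    ContinuousLinearMap.adjoint Aop with hCop
  have hDrootSA : ContinuousLinearMap.adjoint Droot = Droot := isSelfAdjoint_iff'.mp hroot.isSelfAdjoint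
  have hCapp : ∀ x, Cop x = Bs (R x) := by
    intro x
    simp only [hCop, hAop, adjoint_comp, adjoint_adjoint, hDrootSA, comp_apply, hBs, hR]
  have hRrange : LinearMap.range (R : lp (fun _ : ℕ => ℂ) 2 →ₗ[ℂ] H) = W := by
    apply le_antisymm
    · rintro v ⟨x, rfl⟩
      rw [← hTrange]
      exact ⟨Droot x, rfl⟩
    · intro v hv
      obtain ⟨x, hx⟩ : v ∈ LinearMap.range (T : lp (fun _ : ℕ => ℂ) 2 →ₗ[ℂ] H) := by rw [hTrange]; exact hv
      obtain ⟨y, hy⟩ := hDsurj x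
      exact ⟨y, by rw [hR]; simp only [ContinuousLinearMap.coe_coe, comp_apply]; rw [hy]; exact hx⟩
  have hRW : ∀ x, R x ∈ W := fun x => hRrange ▸ LinearMap.mem_range_self _ _
  have hBmem : ∀ x, Bop x ∈ M := fun x => hBrange ▸ LinearMap.mem_range_self _ _
  have hkerBs : ∀ x, Bs x = 0 ↔ x ∈ Mᗮ := by
    intro x
    constructor
    · intro hx
      rw [Submodule.mem_orthogonal]
      intro u hu
      obtain ⟨z, rfl⟩ : ∃ z, Bop z = u := by
        have : u ∈ LinearMap.range (Bop : lp (fun _ : ℕ => ℂ) 2 →ₗ[ℂ] H) := by rw [hBrange]; exact hu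
        exact this
      have h1 : ⟪Bs x, z⟫_ℂ = ⟪x, Bop z⟫_ℂ := ContinuousLinearMap.adjoint_inner_left Bop z x
      rw [hx] at h1
      simp only [inner_zero_left] at h1
      rw [← inner_conj_symm, ← h1]
      simp
    · intro hx
      have h0 : ⟪Bop (Bs x), x⟫_ℂ = 0 :=
        (Submodule.mem_orthogonal M x).mp hx _ (hBmem _)
      have : ⟪Bs x, Bs x⟫_ℂ = 0 := by
        rw [ContinuousLinearMap.adjoint_inner_left Bop (Bs x) x, ← inner_conj_symm, h0]
        simp
      exact inner_self_eq_zero.mp this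
  have hWMo : ∀ v ∈ W, v ∈ Mᗮ → v = 0 := fun v hv hv' =>
    (Submodule.disjoint_def.mp hcompl.disjoint) v hv hv'
  haveI : CompleteSpace M := hM.completeSpace_coe
  haveI : CompleteSpace W := hW.completeSpace_coe
  have hMoC : IsClosed ((Mᗮ : Submodule ℂ H) : Set H) := Submodule.isClosed_orthogonal M
  set P : H →L[ℂ] H := W.subtypeL ∘L W.linearProjOfClosedCompl Mᗮ hcompl hW hMoC with hPdef
  have hPW : ∀ v ∈ W, P v = v := by
    intro v hv
    simp only [hPdef, comp_apply, Submodule.subtypeL_apply,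
      Submodule.coe_continuous_linearProjOfClosedCompl']
    exact congrArg Subtype.val (Submodule.linearProjOfIsCompl_apply_left hcompl ⟨v, hv⟩)
  have hPMo : ∀ v ∈ Mᗮ, P v = 0 := by
    intro v hv
    simp only [hPdef, comp_apply, Submodule.subtypeL_apply,
      Submodule.coe_continuous_linearProjOfClosedCompl']
    rw [Submodule.linearProjOfIsCompl_apply_right hcompl ⟨v, hv⟩]
    rfl
  set Bop' : lp (fun _ : ℕ => ℂ) 2 →L[ℂ] M := Bop.codRestrict M hBmem with hBop'
  have hsurj' : Function.Surjective Bop' := by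
    rintro ⟨m, hm⟩
    obtain ⟨x, hx⟩ : m ∈ LinearMap.range (Bop : lp (fun _ : ℕ => ℂ) 2 →ₗ[ℂ] H) := by rw [hBrange]; exact hm
    exact ⟨x, Subtype.ext hx⟩
  obtain ⟨K₀, hK₀pos, hK₀⟩ := Bop'.exists_preimage_norm_le hsurj'
  have hbound : ∀ v ∈ W, ‖v‖ ≤ (‖P‖ * K₀) * ‖Bs v‖ := by
    intro v hv
    set m : H := (Submodule.orthogonalProjectionOnto M v : H) with hm
    have hsub : v - m ∈ Mᗮ := Submodule.sub_starProjection_mem_orthogonal v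
    have hPm : P m = v := by
      have h1 := hPW v hv
      have h2 := hPMo _ hsub
      have h3 := map_sub P v m
      rw [h1, h2] at h3
      exact (sub_eq_zero.mp h3.symm).symm
    have hvm : ‖v‖ ≤ ‖P‖ * ‖m‖ := by
      calc ‖v‖ = ‖P m‖ := by rw [hPm]
        _ ≤ ‖P‖ * ‖m‖ := P.le_opNorm m
    obtain ⟨x, hx, hxn⟩ := hK₀ (Submodule.orthogonalProjectionOnto M v)
    have hBx : Bop x = m := congrArg Subtype.val hx
    have hxn' : ‖x‖ ≤ K₀ * ‖m‖ := hxn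
    have hip : ⟪m, v⟫_ℂ = ⟪m, m⟫_ℂ := by
      have h0 : ⟪m, v - m⟫_ℂ =
          0 := (Submodule.mem_orthogonal M (v - m)).mp hsub m (Submodule.orthogonalProjectionOnto M v).2
      have h1 : ⟪m, v - m⟫_ℂ = ⟪m, v⟫_ℂ - ⟪m, m⟫_ℂ := inner_sub_right m v m
      rw [h0] at h1
      exact sub_eq_zero.mp h1.symm
    have h1 : ⟪m, v⟫_ℂ = ⟪x, Bs v⟫_ℂ := by
      rw [← hBx]
      exact (ContinuousLinearMap.adjoint_inner_right Bop x v).symm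
    have h2 : ‖⟪m, v⟫_ℂ‖ ≤ ‖x‖ * ‖Bs v‖ := h1 ▸ norm_inner_le_norm x (Bs v)
    have h3 : ‖⟪m, v⟫_ℂ‖ = ‖m‖ * ‖m‖ := by
      rw [hip, inner_self_eq_norm_sq_to_K]
      simp [norm_pow, sq]
    by_cases hm0 : m = 0
    · have hv0 : v = 0 := by rw [← hPm, hm0, map_zero]
      rw [hv0]
      simp only [norm_zero]
      positivity
    · have hmpos : 0 < ‖m‖ := norm_pos_iff.mpr hm0
      have h5 : ‖m‖ * ‖m‖ ≤ ‖m‖ * (K₀ * ‖Bs v‖) := by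
        rw [← h3]
        refine h2.trans ?_
        have h6 : ‖x‖ * ‖Bs v‖ ≤ (K₀ * ‖m‖) * ‖Bs v‖ :=
          mul_le_mul_of_nonneg_right hxn' (norm_nonneg _)
        exact h6.trans (le_of_eq (by ring))
      have h4 : ‖m‖ ≤ K₀ * ‖Bs v‖ := le_of_mul_le_mul_left h5 hmpos
      refine hvm.trans ?_
      have h7 : ‖P‖ * ‖m‖ ≤ ‖P‖ * (K₀ * ‖Bs v‖) :=
        mul_le_mul_of_nonneg_left h4 (norm_nonneg _)
      exact h7.trans (le_of_eq (by ring))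
  have hclosed : IsClosed ((LinearMap.range (Cop : lp (fun _ : ℕ => ℂ) 2 →ₗ[ℂ] lp (fun _ : ℕ => ℂ) 2) : Submodule ℂ (lp (fun _ : ℕ => ℂ) 2)) :
      Set (lp (fun _ : ℕ => ℂ) 2)) := by
    set g : W →L[ℂ] lp (fun _ : ℕ => ℂ) 2 := Bs ∘L W.subtypeL with hgdef
    have hgb : ∀ w : W, ‖w‖ ≤ (⟨‖P‖ * K₀, mul_nonneg (norm_nonneg _) hK₀pos.le⟩ : ℝ≥0) * ‖g w‖ := by
      intro w
      have h1 := hbound (w : H) w.2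
      calc ‖w‖ = ‖(w : H)‖ := rfl
        _ ≤ (‖P‖ * K₀) * ‖Bs (w : H)‖ := h1
        _ = (⟨‖P‖ * K₀, mul_nonneg (norm_nonneg _) hK₀pos.le⟩ : ℝ≥0) * ‖g w‖ := rfl
    have hga : AntilipschitzWith _ g := g.antilipschitz_of_bound hgb
    have hcr : IsClosed (Set.range g) := hga.isClosed_range g.uniformContinuous
    have hset : ((LinearMap.range (Cop : lp (fun _ : ℕ => ℂ) 2 →ₗ[ℂ] lp (fun _ : ℕ => ℂ) 2) : Submodule ℂ (lp (fun _ : ℕ => ℂ) 2)) :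
        Set (lp (fun _ : ℕ => ℂ) 2)) = Set.range g := by
      ext y
      simp only [SetLike.mem_coe, LinearMap.mem_range, Set.mem_range]
      constructor
      · rintro ⟨x, rfl⟩
        refine ⟨⟨R x, hRW x⟩, ?_⟩
        rw [ContinuousLinearMap.coe_coe, hCapp x]
        rfl
      · rintro ⟨w, rfl⟩
        obtain ⟨x, hx⟩ : (w : H) ∈ LinearMap.range (R : lp (fun _ : ℕ => ℂ) 2 →ₗ[ℂ] H) := by rw [hRrange]; exact w.2
        refine ⟨x, ?_⟩
        rw [ContinuousLinearMap.coe_coe, hCapp x, show R x = w from hx]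
        rfl
    rw [hset]
    exact hcr
  have hex : ∃ Xb, Aop ∘L Xb ∘L Aop = Aop ∧ Xb ∘L Aop ∘L Xb = Xb ∧
      IsSelfAdjoint (Aop ∘L Xb) ∧ IsSelfAdjoint (Xb ∘L Aop) := by
    have h1 := exists_penrose_adjoint Cop (exists_penrose_of_isClosed Cop hclosed)
    rwa [hCop, adjoint_adjoint] at h1
  have hp := pinv_spec_s19 Aop hex
  set X : lp (fun _ : ℕ => ℂ) 2 →L[ℂ] lp (fun _ : ℕ => ℂ) 2 :=
    ContinuousLinearMap.adjoint (pinv Aop) with hX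
  have hQapp : ∀ x, Q x = R (X (Bs x)) := by
    intro x
    rw [hQ, hThat]
    simp only [comp_apply, adjoint_comp, adjoint_adjoint, hDrootSA, hX, hBs, hR]
  have hc1 : ∀ x, Cop (X (Cop x)) = Cop x := by
    intro x
    have h := congrArg ContinuousLinearMap.adjoint hp.1
    simp only [adjoint_comp] at h
    have h2 := ContinuousLinearMap.ext_iff.mp h x
    simpa only [comp_apply, ← hCop, ← hX] using h2
  have hkerCR : ∀ z, Cop z = 0 → R z = 0 := by
    intro z hz
    have hb : Bs (R z) = 0 := by rw [← hCapp]; exact hz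
    exact hWMo _ (hRW z) ((hkerBs _).mp hb)
  have hQR : ∀ x, Q (R x) = R x := by
    intro x
    rw [hQapp]
    have h0 : Cop (X (Cop x) - x) = 0 := by rw [map_sub, hc1, sub_self]
    have h1 : R (X (Cop x) - x) = 0 := hkerCR _ h0
    rw [map_sub] at h1
    have h2 : R (X (Cop x)) = R x := sub_eq_zero.mp h1
    rw [← hCapp x]
    exact h2
  have hQWfix : ∀ v ∈ W, Q v = v := by
    intro v hv
    obtain ⟨x, rfl⟩ : v ∈ LinearMap.range (R : lp (fun _ : ℕ => ℂ) 2 →ₗ[ℂ] H) := by rw [hRrange]; exact hv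
    exact hQR x
  have hQMo : ∀ v ∈ Mᗮ, Q v = 0 := by
    intro v hv
    rw [hQapp, (hkerBs v).mpr hv, map_zero, map_zero]
  refine ⟨?_, ?_, ?_, ?_, ?_⟩
  · ext x
    have h := hQR (X (Bs x))
    rw [← hQapp x] at h
    simpa [comp_apply] using h
  · apply le_antisymm
    · rintro v ⟨x, rfl⟩
      rw [ContinuousLinearMap.coe_coe, hQapp x]
      exact hRW _
    · intro v hv
      exact ⟨v, hQWfix v hv⟩
  · apply le_antisymm
    · intro v hv
      rw [LinearMap.mem_ker, ContinuousLinearMap.coe_coe] at hv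
      obtain ⟨w, hw, m, hm, rfl⟩ := Submodule.mem_sup.mp
        (show v ∈ W ⊔ Mᗮ by rw [hcompl.sup_eq_top]; exact Submodule.mem_top)
      have hqwm : Q (w + m) = w := by rw [map_add, hQWfix w hw, hQMo m hm, add_zero]
      rw [hv] at hqwm
      rw [← hqwm, zero_add]
      exact hm
    · intro v hv
      exact LinearMap.mem_ker.mpr (hQMo v hv)
  · intro n
    rw [hThat]
    simp only [comp_apply]
    exact hBmem _
  · intro g hg
    haveI : Fact ((1 : ℝ≥0∞) ≤ 2) := ⟨by norm_num⟩
    set c : lp (fun _ : ℕ => ℂ) 2 := ContinuousLinearMap.adjoint That g with hc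
    have h1 : HasSum (fun n => lp.single 2 n (c n)) c := lp.hasSum_single (by norm_num) c
    have h2 := h1.mapL T
    have h3 : ∀ n, T (lp.single 2 n (c n)) = (inner ℂ (That (lp.single 2 n 1)) g : ℂ) • f n := by
      intro n
      have e1 : (inner ℂ (That (lp.single 2 n 1)) g : ℂ) = c n := by
        rw [hc]
        calc (inner ℂ (That (lp.single 2 n 1)) g : ℂ)
            = ⟪lp.single 2 n (1 : ℂ), ContinuousLinearMap.adjoint That g⟫_ℂ :=
              (ContinuousLinearMap.adjoint_inner_right That _ _).symm
          _ = ContinuousLinearMap.adjoint That g n := by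
              rw [lp.inner_single_left]
              simp
      have e2 : (lp.single 2 n (c n) : lp (fun _ : ℕ => ℂ) 2) = c n • (lp.single 2 n (1 : ℂ) : lp (fun _ : ℕ => ℂ) 2) := by
        have e3 := lp.single_smul (E := fun _ : ℕ => ℂ) (𝕜 := ℂ) 2 n (c n) (1 : ℂ)
        rw [smul_eq_mul, mul_one] at e3
        exact e3
      rw [e2, map_smul, hT n, e1]
    have h4 : T c = g := by
      have h5 : T c = Q g := by rw [hQ]; rfl
      rw [h5, hQWfix g hg]
    rw [h4] at h2
    simpa only [h3] using h2
end
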